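/- Every geodesic interval of a partial cube is a convex set of vertices. -/
import Mathlib


open SimpleGraph

universe u

variable {V : Type u}

/-- The geodesic interval between two vertices: the set of vertices lying on
shortest paths between them. -/
def gInterval (G : SimpleGraph V) (x y : V) : Set V :=
  {z | G.dist x z + G.dist z y = G.dist x y}

/-- A set of vertices is (geodesically) convex. -/
def GConvex (G : SimpleGraph V) (C : Set V) : Prop :=
  ∀ x ∈ C, ∀ y ∈ C, gInterval G x y ⊆ C

/-- `Wside G a b` is the set `W_ab` of vertices strictly closer to `a` than to `b`. -/
def Wside (G : SimpleGraph V) (a b : V) : Set V :=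
  {x | G.dist a x < G.dist b x}

/-- `Uside G a b` is the set `U_ab` of vertices of `W_ab` having a neighbour in `W_ba`. -/
def Uside (G : SimpleGraph V) (a b : V) : Set V :=
  {x | x ∈ Wside G a b ∧ ∃ y, G.Adj x y ∧ y ∈ Wside G b a}

/-- A graph is bipartite if it admits a proper 2-colouring. -/
def IsBipartiteGraph (G : SimpleGraph V) : Prop :=
  ∃ c : V → Bool, ∀ u v, G.Adj u v → c u ≠ c v

/-- A partial cube: a connected bipartite graph all of whose half-spaces `W_ab`, `W_ba`
are convex (Djoković's characterization). -/
def IsPartialCube (G : SimpleGraph V) : Prop :=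
  G.Connected ∧ IsBipartiteGraph G ∧
    ∀ a b, G.Adj a b → GConvex G (Wside G a b) ∧ GConvex G (Wside G b a)

/-- The Djoković–Winkler relation Θ between (unordered) edges. -/
def ThetaRel (G : SimpleGraph V) (e f : Sym2 V) : Prop :=
  ∃ x y u v : V, e = s(x, y) ∧ f = s(u, v) ∧
    G.dist x u + G.dist y v ≠ G.dist x v + G.dist y u

/-- The geodesic convex hull of a set of vertices. -/
def gConvexHull (G : SimpleGraph V) (A : Set V) : Set V :=
  ⋂₀ {C : Set V | GConvex G C ∧ A ⊆ C}

private lemma walk_parity {G : SimpleGraph V} {c : V → Bool}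
    (hc : ∀ u v, G.Adj u v → c u ≠ c v) {u v : V} (p : G.Walk u v) :
    (c u = c v) ↔ Even p.length := by
  induction p with
  | nil => simp
  | cons h q ih =>
    rename_i a b w
    have := hc a b h
    simp only [Walk.length_cons, Nat.even_add_one, ← ih]
    cases hcb : c b <;> cases hca : c a <;> cases hcw : c w <;> simp_all

private lemma dist_parity {G : SimpleGraph V} (hconn : G.Connected) {c : V → Bool}
    (hc : ∀ u v, G.Adj u v → c u ≠ c v) (u v : V) :
    Even (G.dist u v) ↔ c u = c v := by
  obtain ⟨p, hp⟩ := (hconn u v).exists_walk_length_eq_dist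
  rw [← hp, ← walk_parity hc p]

private lemma adj_dist_cases {G : SimpleGraph V} (hconn : G.Connected) {c : V → Bool}
    (hc : ∀ u v, G.Adj u v → c u ≠ c v) {a b : V} (hab : G.Adj a b) (w : V) :
    G.dist w b = G.dist w a + 1 ∨ G.dist w a = G.dist w b + 1 := by
  have hne : G.dist w a ≠ G.dist w b := by
    intro h
    have h1 := dist_parity hconn hc w a
    have h2 := dist_parity hconn hc w b
    have := hc a b hab
    rw [h] at h1
    cases hca : c a <;> cases hcb : c b <;> cases hcw : c w <;> simp_all
  have h1 : G.dist a b = 1 := (dist_eq_one_iff_adj).2 hab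
  have h2 : G.dist b a = 1 := (dist_eq_one_iff_adj).2 hab.symm
  have t1 : G.dist w b ≤ G.dist w a + G.dist a b := hconn.dist_triangle
  have t2 : G.dist w a ≤ G.dist w b + G.dist b a := hconn.dist_triangle
  omega

private lemma key_sep {G : SimpleGraph V} (hconn : G.Connected) {c : V → Bool}
    (hc : ∀ u v, G.Adj u v → c u ≠ c v) (x y z : V) :
    ∀ n u, G.dist u x = n → G.dist z u + G.dist u x = G.dist z x →
      G.dist x y < G.dist x u + G.dist u y →
      ∃ a b, G.Adj a b ∧ G.dist a x < G.dist b x ∧ G.dist a y < G.dist b y ∧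
        G.dist b z < G.dist a z := by
  intro n
  induction n with
  | zero =>
    intro u hux _ hlt
    have hux' : u = x := ((hconn u x).dist_eq_zero_iff).1 hux
    subst hux'
    rw [SimpleGraph.dist_self, Nat.zero_add] at hlt
    exact absurd hlt (lt_irrefl _)
  | succ n ih =>
    intro u hux hzu hlt
    obtain ⟨p, hp⟩ := (hconn u x).exists_walk_length_eq_dist
    rw [hux] at hp
    cases p with
    | nil => simp at hp
    | cons h q =>
      rename_i u'
      simp only [Walk.length_cons, Nat.succ.injEq] at hp
      -- dist u' x = n
      have hq : G.dist u' x ≤ n := hp ▸ SimpleGraph.dist_le q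
      have huu' : G.dist u u' = 1 := (dist_eq_one_iff_adj).2 h
      have ht1 : G.dist u x ≤ G.dist u u' + G.dist u' x := hconn.dist_triangle
      have hu'x : G.dist u' x = n := by omega
      -- dist z u' = dist z u + 1 and u' ∈ I(z,x)
      have ht2 : G.dist z u' ≤ G.dist z u + G.dist u u' := hconn.dist_triangle
      have ht3 : G.dist z x ≤ G.dist z u' + G.dist u' x := hconn.dist_triangle
      have hzu' : G.dist z u' = G.dist z u + 1 := by omega
      have hzu'2 : G.dist z u' + G.dist u' x = G.dist z x := by omega
      -- distances to y from u, u' differ by one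
      have hcomm1 : G.dist x u = G.dist u x := SimpleGraph.dist_comm ..
      have hcomm2 : G.dist x u' = G.dist u' x := SimpleGraph.dist_comm ..
      rcases adj_dist_cases hconn hc h y with hcase | hcase
      · -- dist y u' = dist y u + 1 : still a violator
        have : G.dist x y < G.dist x u' + G.dist u' y := by
          have c1 : G.dist y u = G.dist u y := SimpleGraph.dist_comm ..
          have c2 : G.dist y u' = G.dist u' y := SimpleGraph.dist_comm ..
          omega
        exact ih u' hu'x hzu'2 this
      · -- dist y u = dist y u' + 1
        have c1 : G.dist y u = G.dist u y := SimpleGraph.dist_comm ..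
        have c2 : G.dist y u' = G.dist u' y := SimpleGraph.dist_comm ..
        by_cases hvi : G.dist x y < G.dist x u' + G.dist u' y
        · exact ih u' hu'x hzu'2 hvi
        · refine ⟨u', u, h.symm, by omega, by omega, ?_⟩
          have d1 : G.dist u z = G.dist z u := SimpleGraph.dist_comm ..
          have d2 : G.dist u' z = G.dist z u' := SimpleGraph.dist_comm ..
          omega


/-- Every geodesic interval of a partial cube is convex. -/
theorem stmt_2 (G : SimpleGraph V) (hG : IsPartialCube G) (x y : V) :
    GConvex G (gInterval G x y) := by
  obtain ⟨hconn, ⟨c, hc⟩, hcvx⟩ := hG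
  intro z hz w hw t ht
  by_contra hne
  have hz' : G.dist x z + G.dist z y = G.dist x y := hz
  have hw' : G.dist x w + G.dist w y = G.dist x y := hw
  have ht' : G.dist z t + G.dist t w = G.dist z w := ht
  have hne' : G.dist x t + G.dist t y ≠ G.dist x y := hne
  have htri : G.dist x y ≤ G.dist x t + G.dist t y := hconn.dist_triangle
  have hlt : G.dist x y < G.dist x t + G.dist t y := lt_of_le_of_ne htri (Ne.symm hne')
  obtain ⟨a, b, hab, hax, hay, hbt⟩ :=
    key_sep hconn hc x y t (G.dist t x) t rfl (by simp [SimpleGraph.dist_self]) hlt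
  have hWc : GConvex G (Wside G a b) := (hcvx a b hab).1
  have hxW : x ∈ Wside G a b := hax
  have hyW : y ∈ Wside G a b := hay
  have hzW : z ∈ Wside G a b := hWc x hxW y hyW hz
  have hwW : w ∈ Wside G a b := hWc x hxW y hyW hw
  have htW : t ∈ Wside G a b := hWc z hzW w hwW ht
  have : G.dist a t < G.dist b t := htW
  omega
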